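/- Let 1 ≤ p < ∞ and d ∈ ℕ, set r = ⌈2 d^{1−1/p}⌉ and s = ⌊d/r⌋, and let V_p^d be the linear space of all functions on [0,1]^d of the form f(x) = Σ_{i ∈ {0,1}^s} a_i · (x₁+⋯+x_r)^{i₁} (x_{r+1}+⋯+x_{2r})^{i₂} ⋯ (x_{r(s−1)+1}+⋯+x_{rs})^{i_s} with real coefficients a_i. Then for every f ∈ V_p^d and every v ∈ ℝ^d the directional derivative satisfies sup_{x ∈ [0,1]^d} |(∇_v f)(x)| ≤ |v|_p · sup_{x ∈ [0,1]^d} |f(x)|. Consequently, for every f ∈ V_p^d, every k ∈ ℕ and all v₁,…,v_k ∈ ℝ^d, sup_{x ∈ [0,1]^d} |(∇_{v_k} ⋯ ∇_{v₁} f)(x)| ≤ |v₁|_p ⋯ |v_k|_p · sup_{x ∈ [0,1]^d} |f(x)|. -/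

import Mathlib

/-- The directional derivative `∇_v f` of `f : ℝ^d → ℝ` along `v`. -/
noncomputable def dirDeriv (d : ℕ) (v : Fin d → ℝ) (f : (Fin d → ℝ) → ℝ) :
    (Fin d → ℝ) → ℝ :=
  fun x => fderiv ℝ f x v

/-- The iterated directional derivative `∇_{v_k} ⋯ ∇_{v_1} f`. -/
noncomputable def iterDirDeriv (d : ℕ) : (k : ℕ) → (Fin k → Fin d → ℝ) →
    ((Fin d → ℝ) → ℝ) → ((Fin d → ℝ) → ℝ)
  | 0, _, f => f
  | k + 1, v, f => dirDeriv d (v (Fin.last k)) (iterDirDeriv d k (fun j => v j.castSucc) f)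

lemma block_lt {d r s : ℕ} (hs : s = d / r) (j : Fin s) (t : Fin r) :
    (j : ℕ) * r + (t : ℕ) < d := by
  have hj : (j : ℕ) < d / r := hs ▸ j.isLt
  have key : (j : ℕ) * r + (t : ℕ) < ((j : ℕ) + 1) * r := by
    have := t.isLt
    nlinarith
  have h1 : ((j : ℕ) + 1) * r ≤ d / r * r := Nat.mul_le_mul_right r hj
  have h2 : d / r * r ≤ d := Nat.div_mul_le_self d r
  omega

noncomputable def Sblock {d r s : ℕ} (hs : s = d / r) (j : Fin s) : (Fin d → ℝ) →L[ℝ] ℝ :=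
  ∑ t : Fin r, ContinuousLinearMap.proj ⟨(j : ℕ) * r + (t : ℕ), block_lt hs j t⟩

lemma Sblock_apply {d r s : ℕ} (hs : s = d / r) (j : Fin s) (x : Fin d → ℝ) :
    Sblock hs j x = ∑ t : Fin r, x ⟨(j : ℕ) * r + (t : ℕ), block_lt hs j t⟩ := by
  simp [Sblock]

noncomputable def poly {d r s : ℕ} (hs : s = d / r) (a : (Fin s → Fin 2) → ℝ) :
    (Fin d → ℝ) → ℝ :=
  fun x => ∑ i : Fin s → Fin 2, a i * ∏ j : Fin s, (Sblock hs j x) ^ ((i j : ℕ))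

lemma poly_continuous {d r s : ℕ} (hs : s = d / r) (a : (Fin s → Fin 2) → ℝ) :
    Continuous (poly hs a) := by
  unfold poly
  exact continuous_finset_sum _ fun i _ => continuous_const.mul
    (continuous_finset_prod _ fun j _ => ((Sblock hs j).continuous.pow _))

lemma poly_hasFDerivAt {d r s : ℕ} (hs : s = d / r) (a : (Fin s → Fin 2) → ℝ)
    (x : Fin d → ℝ) :
    HasFDerivAt (poly hs a)
      (∑ i : Fin s → Fin 2, a i • ∑ j : Fin s,
        (∏ j' ∈ Finset.univ.erase j, (Sblock hs j' x) ^ ((i j' : ℕ))) •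
          ((((i j : ℕ) : ℝ) * (Sblock hs j x) ^ ((i j : ℕ) - 1)) • Sblock hs j)) x := by
  unfold poly
  apply HasFDerivAt.fun_sum
  intro i _
  exact (HasFDerivAt.finset_prod fun j _ =>
    (hasDerivAt_pow _ _).comp_hasFDerivAt x (Sblock hs j).hasFDerivAt).const_mul (a i)

lemma fin2cases : ∀ c : Fin 2, c = 0 ∨ c = 1 := by decide

lemma dirDeriv_poly_apply {d r s : ℕ} (hs : s = d / r) (a : (Fin s → Fin 2) → ℝ)
    (v x : Fin d → ℝ) :
    dirDeriv d v (poly hs a) x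
      = ∑ j : Fin s, Sblock hs j v *
          (∑ i : Fin s → Fin 2, (if i j = 1 then a i else 0) *
            ∏ j' ∈ Finset.univ.erase j, (Sblock hs j' x) ^ ((i j' : ℕ))) := by
  have h := (poly_hasFDerivAt hs a x).fderiv
  show fderiv ℝ (poly hs a) x v = _
  rw [h]
  simp only [ContinuousLinearMap.sum_apply, ContinuousLinearMap.smul_apply, smul_eq_mul]
  simp only [Finset.mul_sum]
  rw [Finset.sum_comm]
  refine Finset.sum_congr rfl fun j _ => Finset.sum_congr rfl fun i _ => ?_
  rcases fin2cases (i j) with h2 | h2 <;> simp [h2] <;> ring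

def flip2 : Fin 2 → Fin 2 := fun c => if c = 0 then 1 else 0

lemma flip2_flip2 : ∀ c : Fin 2, flip2 (flip2 c) = c := by decide

noncomputable def dcoeff {d r s : ℕ} (hs : s = d / r) (a : (Fin s → Fin 2) → ℝ)
    (v : Fin d → ℝ) : (Fin s → Fin 2) → ℝ :=
  fun i => ∑ j : Fin s, if i j = 0 then Sblock hs j v * a (Function.update i j 1) else 0

lemma dirDeriv_poly {d r s : ℕ} (hs : s = d / r) (a : (Fin s → Fin 2) → ℝ)
    (v : Fin d → ℝ) :
    dirDeriv d v (poly hs a) = poly hs (dcoeff hs a v) := by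
  funext x
  rw [dirDeriv_poly_apply]
  unfold poly dcoeff
  simp only [Finset.sum_mul, Finset.mul_sum]
  conv_rhs => rw [Finset.sum_comm]
  refine Finset.sum_congr rfl fun j _ => ?_
  have hinv : Function.Involutive (fun i : Fin s → Fin 2 => Function.update i j (flip2 (i j))) := by
    intro i
    simp [Function.update_idem, Function.update_self, flip2_flip2, Function.update_eq_self]
  refine Fintype.sum_bijective _ hinv.bijective _ _ fun i => ?_
  rcases fin2cases (i j) with h2 | h2
  · simp [h2, flip2]
  · have hupd2 : Function.update i j 1 = i := by rw [← h2]; exact Function.update_eq_self j i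
    have hprod2 : ∏ j' : Fin s, (Sblock hs j' x) ^ (((Function.update i j 0) j' : ℕ))
        = ∏ j' ∈ Finset.univ.erase j, (Sblock hs j' x) ^ ((i j' : ℕ)) := by
      rw [← Finset.mul_prod_erase Finset.univ _ (Finset.mem_univ j), Function.update_self]
      simp only [Fin.val_zero, pow_zero, one_mul]
      exact Finset.prod_congr rfl fun j' hj' => by
        rw [Function.update_of_ne (Finset.ne_of_mem_erase hj')]
    simp [h2, flip2, hupd2, hprod2]
    ring

lemma sup_bdd {d : ℕ} {f : (Fin d → ℝ) → ℝ} (hc : Continuous f) :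
    BddAbove (Set.range fun y : Set.Icc (0:Fin d → ℝ) 1 => |f y.1|) := by
  have hb : BddAbove ((fun z => |f z|) '' Set.Icc (0:Fin d → ℝ) 1) :=
    (isCompact_Icc.image hc.abs).bddAbove
  refine hb.mono ?_
  rintro _ ⟨y, rfl⟩
  exact ⟨y.1, y.2, rfl⟩

lemma abs_le_sup {d : ℕ} {f : (Fin d → ℝ) → ℝ} (hc : Continuous f) {x}
    (hx : x ∈ Set.Icc (0:Fin d → ℝ) 1) :
    |f x| ≤ ⨆ y : Set.Icc (0:Fin d → ℝ) 1, |f y.1| :=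
  le_ciSup (sup_bdd hc) (⟨x, hx⟩ : Set.Icc (0:Fin d → ℝ) 1)

lemma zero_mem_Icc01 {d : ℕ} : (0 : Fin d → ℝ) ∈ Set.Icc (0:Fin d → ℝ) 1 :=
  Set.left_mem_Icc.mpr zero_le_one

lemma sup_nonneg' {d : ℕ} {f : (Fin d → ℝ) → ℝ} (hc : Continuous f) :
    0 ≤ ⨆ y : Set.Icc (0:Fin d → ℝ) 1, |f y.1| :=
  (abs_nonneg _).trans (abs_le_sup hc zero_mem_Icc01)

lemma hblock_bound {d r s : ℕ} (hs : s = d / r) (a : (Fin s → Fin 2) → ℝ) (j : Fin s)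
    {x : Fin d → ℝ} (hx : x ∈ Set.Icc (0:Fin d → ℝ) 1) :
    (r:ℝ) * |∑ i : Fin s → Fin 2, (if i j = 1 then a i else 0) *
        ∏ j' ∈ Finset.univ.erase j, (Sblock hs j' x) ^ ((i j' : ℕ))|
      ≤ 2 * ⨆ y : Set.Icc (0:Fin d → ℝ) 1, |poly hs a y.1| := by
  set z : ℝ → (Fin d → ℝ) :=
    fun c m => if (j:ℕ)*r ≤ (m:ℕ) ∧ (m:ℕ) < (j:ℕ)*r + r then c else x m with hz
  have hzmem : ∀ c : ℝ, 0 ≤ c → c ≤ 1 → z c ∈ Set.Icc (0:Fin d → ℝ) 1 := by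
    intro c hc0 hc1
    rw [Set.mem_Icc] at hx ⊢
    constructor <;> intro m <;> simp only [hz] <;> split
    · exact hc0
    · exact hx.1 m
    · exact hc1
    · exact hx.2 m
  have hSother : ∀ (c : ℝ) (j' : Fin s), j' ≠ j → Sblock hs j' (z c) = Sblock hs j' x := by
    intro c j' hne
    rw [Sblock_apply, Sblock_apply]
    refine Finset.sum_congr rfl fun t _ => ?_
    have hvne : (j' : ℕ) ≠ (j : ℕ) := fun h => hne (Fin.ext h)
    have harith : ¬ ((j:ℕ)*r ≤ (j':ℕ)*r + (t:ℕ) ∧ (j':ℕ)*r + (t:ℕ) < (j:ℕ)*r + r) := by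
      rcases lt_or_gt_of_ne hvne with h | h
      · have h3 : (j':ℕ)*r + r ≤ (j:ℕ)*r := by
          rw [← Nat.succ_mul]; exact Nat.mul_le_mul_right r h
        have := t.isLt
        omega
      · have h3 : (j:ℕ)*r + r ≤ (j':ℕ)*r := by
          rw [← Nat.succ_mul]; exact Nat.mul_le_mul_right r h
        omega
    simp only [hz]
    rw [if_neg harith]
  have hSj : ∀ c : ℝ, Sblock hs j (z c) = (r:ℝ) * c := by
    intro c
    rw [Sblock_apply]
    have : ∀ t : Fin r, z c ⟨(j:ℕ)*r + (t:ℕ), block_lt hs j t⟩ = c := by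
      intro t
      simp only [hz]
      rw [if_pos]
      exact ⟨Nat.le_add_right _ _, by have := t.isLt; omega⟩
    rw [Finset.sum_congr rfl fun t _ => this t]
    simp [Finset.card_univ, mul_comm]
  have hpoly : ∀ c : ℝ, poly hs a (z c)
      = ∑ i : Fin s → Fin 2, a i * (((r:ℝ)*c) ^ ((i j : ℕ)) *
          ∏ j' ∈ Finset.univ.erase j, (Sblock hs j' x) ^ ((i j' : ℕ))) := by
    intro c
    unfold poly
    refine Finset.sum_congr rfl fun i _ => ?_
    rw [← Finset.mul_prod_erase Finset.univ _ (Finset.mem_univ j), hSj]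
    congr 1
    congr 1
    exact Finset.prod_congr rfl fun j' hj' => by
      rw [hSother c j' (Finset.ne_of_mem_erase hj')]
  have key : poly hs a (z 1) - poly hs a (z 0)
      = (r:ℝ) * ∑ i : Fin s → Fin 2, (if i j = 1 then a i else 0) *
          ∏ j' ∈ Finset.univ.erase j, (Sblock hs j' x) ^ ((i j' : ℕ)) := by
    rw [hpoly 1, hpoly 0, Finset.mul_sum, ← Finset.sum_sub_distrib]
    refine Finset.sum_congr rfl fun i _ => ?_
    rcases fin2cases (i j) with h2 | h2 <;> simp [h2] <;> ring
  have hcont := poly_continuous hs a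
  have h1 := abs_le_sup hcont (hzmem 1 zero_le_one le_rfl)
  have h0 := abs_le_sup hcont (hzmem 0 le_rfl zero_le_one)
  calc (r:ℝ) * |∑ i : Fin s → Fin 2, (if i j = 1 then a i else 0) *
        ∏ j' ∈ Finset.univ.erase j, (Sblock hs j' x) ^ ((i j' : ℕ))|
      = |poly hs a (z 1) - poly hs a (z 0)| := by
        rw [key, abs_mul, abs_of_nonneg (by positivity : (0:ℝ) ≤ (r:ℝ))]
    _ ≤ |poly hs a (z 1)| + |poly hs a (z 0)| := abs_sub _ _
    _ ≤ _ := by linarith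

lemma holder_card {ι : Type*} [Fintype ι] (z : ι → ℝ) (hz : ∀ i, 0 ≤ z i) {p : ℝ}
    (hp : 1 ≤ p) :
    ∑ i, z i ≤ (Fintype.card ι : ℝ) ^ ((1:ℝ) - 1/p) * (∑ i, z i ^ p) ^ (1/p) := by
  have hp0 : 0 < p := lt_of_lt_of_le one_pos hp
  rcases isEmpty_or_nonempty ι with h | h
  · simp only [Finset.univ_eq_empty, Finset.sum_empty]
    have : ((0:ℝ)) ^ (1/p) = 0 := Real.zero_rpow (one_div_ne_zero hp0.ne')
    rw [this, mul_zero]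
  · set n := (Fintype.card ι : ℝ) with hn
    have hnpos : (0:ℝ) < n := by
      rw [hn]; exact_mod_cast Fintype.card_pos
    have key := Real.arith_mean_le_rpow_mean Finset.univ (fun _ => 1/n) z
      (fun _ _ => by positivity)
      (by rw [Finset.sum_const, Finset.card_univ, nsmul_eq_mul, ← hn]
          field_simp)
      (fun i _ => hz i) hp
    rw [← Finset.mul_sum, ← Finset.mul_sum] at key
    have hsum_nonneg : (0:ℝ) ≤ ∑ i, z i ^ p :=
      Finset.sum_nonneg fun i _ => Real.rpow_nonneg (hz i) p
    have h2 : ((1/n) * ∑ i, z i ^ p) ^ (1/p) = (1/n)^(1/p) * (∑ i, z i ^ p)^(1/p) :=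
      Real.mul_rpow (by positivity) hsum_nonneg
    rw [h2] at key
    have h3 : ∑ i, z i ≤ n * ((1/n)^(1/p) * (∑ i, z i^p)^(1/p)) := by
      have := mul_le_mul_of_nonneg_left key hnpos.le
      calc ∑ i, z i = n * ((1/n) * ∑ i, z i) := by field_simp
        _ ≤ n * ((1/n)^(1/p) * (∑ i, z i^p)^(1/p)) := this
    refine h3.trans_eq ?_
    rw [← mul_assoc]
    congr 1
    have : n * (1/n)^(1/p) = n^(1:ℝ) * n^(-(1/p)) := by
      rw [Real.rpow_one, one_div, Real.inv_rpow hnpos.le, ← Real.rpow_neg hnpos.le]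
    rw [this, ← Real.rpow_add hnpos]
    ring_nf

lemma poly_dirDeriv_bound {d r s : ℕ} (hd : 1 ≤ d) {p : ℝ} (hp : 1 ≤ p)
    (hr : r = ⌈(2 : ℝ) * (d : ℝ) ^ (1 - 1 / p)⌉₊) (hs : s = d / r)
    (a : (Fin s → Fin 2) → ℝ) (v : Fin d → ℝ) {x : Fin d → ℝ}
    (hx : x ∈ Set.Icc (0:Fin d → ℝ) 1) :
    |dirDeriv d v (poly hs a) x| ≤ (∑ m, |v m| ^ p) ^ (1/p) *
      ⨆ y : Set.Icc (0:Fin d → ℝ) 1, |poly hs a y.1| := by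
  have hp0 : (0:ℝ) < p := lt_of_lt_of_le one_pos hp
  have he0 : (0:ℝ) ≤ 1 - 1/p := by
    have : 1/p ≤ 1 := by rw [div_le_one hp0]; exact hp
    linarith
  have hd1 : (1:ℝ) ≤ (d:ℝ) := by exact_mod_cast hd
  have hde : (1:ℝ) ≤ (d:ℝ)^((1:ℝ)-1/p) := by
    calc (1:ℝ) = (1:ℝ)^((1:ℝ)-1/p) := (Real.one_rpow _).symm
      _ ≤ (d:ℝ)^((1:ℝ)-1/p) := Real.rpow_le_rpow zero_le_one hd1 he0
  have hr2 : (2:ℝ) * (d:ℝ)^((1:ℝ)-1/p) ≤ (r:ℝ) := by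
    rw [hr]; exact Nat.le_ceil _
  have hrpos : (0:ℝ) < (r:ℝ) := by linarith
  have hrnat : 0 < r := by exact_mod_cast hrpos
  set M := ⨆ y : Set.Icc (0:Fin d → ℝ) 1, |poly hs a y.1| with hM
  have hM0 : 0 ≤ M := sup_nonneg' (poly_continuous hs a)
  set Np := (∑ m, |v m| ^ p) ^ (1/p) with hNp
  have hNp0 : 0 ≤ Np :=
    Real.rpow_nonneg (Finset.sum_nonneg fun m _ => Real.rpow_nonneg (abs_nonneg _) p) _
  -- per-block functions
  set hb : Fin s → ℝ := fun j => ∑ i : Fin s → Fin 2, (if i j = 1 then a i else 0) *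
      ∏ j' ∈ Finset.univ.erase j, (Sblock hs j' x) ^ ((i j' : ℕ)) with hhb
  have hjbound : ∀ j : Fin s, |hb j| ≤ 2 * M / (r:ℝ) := by
    intro j
    rw [le_div_iff₀ hrpos]
    have := hblock_bound hs a j hx
    linarith [this]
  set T := ∑ j : Fin s, |Sblock hs j v| with hT
  have stepA : |dirDeriv d v (poly hs a) x| ≤ T * (2 * M / (r:ℝ)) := by
    rw [dirDeriv_poly_apply]
    calc |∑ j : Fin s, Sblock hs j v * hb j|
        ≤ ∑ j : Fin s, |Sblock hs j v * hb j| := Finset.abs_sum_le_sum_abs _ _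
      _ = ∑ j : Fin s, |Sblock hs j v| * |hb j| := by
          exact Finset.sum_congr rfl fun j _ => abs_mul _ _
      _ ≤ ∑ j : Fin s, |Sblock hs j v| * (2 * M / (r:ℝ)) :=
          Finset.sum_le_sum fun j _ =>
            mul_le_mul_of_nonneg_left (hjbound j) (abs_nonneg _)
      _ = T * (2 * M / (r:ℝ)) := by rw [hT, Finset.sum_mul]
  -- Hölder
  set z : Fin s × Fin r → ℝ :=
    fun q => |v ⟨(q.1 : ℕ) * r + (q.2 : ℕ), block_lt hs q.1 q.2⟩| with hz
  have stepB : T ≤ ∑ q : Fin s × Fin r, z q := by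
    rw [Fintype.sum_prod_type, hT]
    refine Finset.sum_le_sum fun j _ => ?_
    rw [Sblock_apply]
    exact Finset.abs_sum_le_sum_abs _ _
  have stepC : ∑ q : Fin s × Fin r, z q
      ≤ ((s*r : ℕ) : ℝ) ^ ((1:ℝ) - 1/p) * (∑ q : Fin s × Fin r, z q ^ p) ^ (1/p) := by
    have := holder_card z (fun q => abs_nonneg _) hp
    simpa [Fintype.card_prod, Fintype.card_fin] using this
  have einj : Function.Injective
      (fun q : Fin s × Fin r => (⟨(q.1 : ℕ) * r + (q.2 : ℕ), block_lt hs q.1 q.2⟩ : Fin d)) := by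
    intro q q' h
    have h1 : (q.1 : ℕ) * r + (q.2 : ℕ) = (q'.1 : ℕ) * r + (q'.2 : ℕ) := by
      simpa [Fin.ext_iff] using h
    have hj : (q.1 : ℕ) = (q'.1 : ℕ) := by
      rcases lt_trichotomy (q.1 : ℕ) (q'.1 : ℕ) with hlt | heq | hgt
      · exfalso
        have h3 : (q.1:ℕ)*r + r ≤ (q'.1:ℕ)*r := by
          rw [← Nat.succ_mul]; exact Nat.mul_le_mul_right r hlt
        have := q.2.isLt
        omega
      · exact heq
      · exfalso
        have h3 : (q'.1:ℕ)*r + r ≤ (q.1:ℕ)*r := by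
          rw [← Nat.succ_mul]; exact Nat.mul_le_mul_right r hgt
        have := q'.2.isLt
        omega
    have ht : (q.2 : ℕ) = (q'.2 : ℕ) := by
      rw [hj] at h1; omega
    exact Prod.ext (Fin.ext hj) (Fin.ext ht)
  have stepD : ∑ q : Fin s × Fin r, z q ^ p ≤ ∑ m : Fin d, |v m| ^ p := by
    have him : ∑ m ∈ Finset.univ.image
          (fun q : Fin s × Fin r => (⟨(q.1 : ℕ) * r + (q.2 : ℕ), block_lt hs q.1 q.2⟩ : Fin d)),
        |v m| ^ p = ∑ q : Fin s × Fin r, z q ^ p :=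
      Finset.sum_image fun q _ q' _ h => einj h
    rw [← him]
    exact Finset.sum_le_sum_of_subset_of_nonneg (Finset.subset_univ _)
      (fun m _ _ => Real.rpow_nonneg (abs_nonneg _) p)
  have stepE : (∑ q : Fin s × Fin r, z q ^ p) ^ (1/p) ≤ Np :=
    Real.rpow_le_rpow (Finset.sum_nonneg fun q _ => Real.rpow_nonneg (abs_nonneg _) p)
      stepD (by positivity)
  have hsr : ((s*r : ℕ) : ℝ) ^ ((1:ℝ) - 1/p) ≤ (d:ℝ) ^ ((1:ℝ) - 1/p) := by
    refine Real.rpow_le_rpow (by positivity) ?_ he0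
    have : s * r ≤ d := by rw [hs]; exact Nat.div_mul_le_self d r
    exact_mod_cast this
  have hTfin : T ≤ (d:ℝ) ^ ((1:ℝ) - 1/p) * Np := by
    calc T ≤ ∑ q : Fin s × Fin r, z q := stepB
      _ ≤ ((s*r : ℕ) : ℝ) ^ ((1:ℝ) - 1/p) * (∑ q, z q ^ p) ^ (1/p) := stepC
      _ ≤ ((s*r : ℕ) : ℝ) ^ ((1:ℝ) - 1/p) * Np :=
          mul_le_mul_of_nonneg_left stepE (by positivity)
      _ ≤ (d:ℝ) ^ ((1:ℝ) - 1/p) * Np := mul_le_mul_of_nonneg_right hsr hNp0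
  have hT0 : 0 ≤ T := Finset.sum_nonneg fun j _ => abs_nonneg _
  have hfrac : 2 * (d:ℝ) ^ ((1:ℝ) - 1/p) / (r:ℝ) ≤ 1 := by
    rw [div_le_one hrpos]; linarith
  calc |dirDeriv d v (poly hs a) x| ≤ T * (2 * M / (r:ℝ)) := stepA
    _ ≤ ((d:ℝ) ^ ((1:ℝ) - 1/p) * Np) * (2 * M / (r:ℝ)) :=
        mul_le_mul_of_nonneg_right hTfin (by positivity)
    _ = (2 * (d:ℝ) ^ ((1:ℝ) - 1/p) / (r:ℝ)) * (Np * M) := by ring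
    _ ≤ 1 * (Np * M) := mul_le_mul_of_nonneg_right hfrac (by positivity)
    _ = Np * M := one_mul _

theorem stmt6 (d : ℕ) (hd : 1 ≤ d) (p : ℝ) (hp : 1 ≤ p)
    (r s : ℕ)
    (hr : r = ⌈(2 : ℝ) * (d : ℝ) ^ (1 - 1 / p)⌉₊)
    (hs : s = d / r)
    (f : (Fin d → ℝ) → ℝ)
    (hf : ∃ a : (Fin s → Fin 2) → ℝ, ∀ x : Fin d → ℝ,
      f x = ∑ i : Fin s → Fin 2, a i *
        ∏ j : Fin s,
          (∑ t : Fin r, x ⟨(j : ℕ) * r + (t : ℕ), block_lt hs j t⟩) ^ ((i j : ℕ))) :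
    (∀ v : Fin d → ℝ, ∀ x ∈ Set.Icc (0 : Fin d → ℝ) 1,
        |dirDeriv d v f x| ≤ (∑ j, |v j| ^ p) ^ (1 / p) *
          ⨆ y : Set.Icc (0 : Fin d → ℝ) 1, |f y.1|) ∧
    (∀ (k : ℕ) (v : Fin k → Fin d → ℝ), ∀ x ∈ Set.Icc (0 : Fin d → ℝ) 1,
        |iterDirDeriv d k v f x| ≤ (∏ l, (∑ j, |v l j| ^ p) ^ (1 / p)) *
          ⨆ y : Set.Icc (0 : Fin d → ℝ) 1, |f y.1|) := by
  obtain ⟨a, ha⟩ := hf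
  have hfeq : f = poly hs a := by
    funext x
    rw [ha x]
    unfold poly
    refine Finset.sum_congr rfl fun i _ => ?_
    congr 1
    exact Finset.prod_congr rfl fun j _ => by rw [Sblock_apply]
  have hcf : Continuous f := by rw [hfeq]; exact poly_continuous hs a
  haveI : Nonempty (Set.Icc (0:Fin d → ℝ) 1) := ⟨⟨0, zero_mem_Icc01⟩⟩
  have main : ∀ (k : ℕ) (v : Fin k → Fin d → ℝ),
      (∃ b, iterDirDeriv d k v f = poly hs b) ∧
      ∀ x ∈ Set.Icc (0:Fin d → ℝ) 1, |iterDirDeriv d k v f x| ≤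
        (∏ l, (∑ j, |v l j| ^ p) ^ (1/p)) *
          ⨆ y : Set.Icc (0:Fin d → ℝ) 1, |f y.1| := by
    intro k
    induction k with
    | zero =>
      intro v
      refine ⟨⟨a, hfeq⟩, fun x hx => ?_⟩
      show |f x| ≤ _
      have : (∏ l : Fin 0, (∑ j, |v l j| ^ p) ^ (1/p)) = 1 := by simp
      rw [this, one_mul]
      exact abs_le_sup hcf hx
    | succ k ih =>
      intro v
      obtain ⟨⟨b, hb⟩, hbound⟩ := ih (fun l => v l.castSucc)
      have hiter : iterDirDeriv d (k+1) v f
          = dirDeriv d (v (Fin.last k)) (poly hs b) := by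
        show dirDeriv d (v (Fin.last k)) (iterDirDeriv d k (fun j => v j.castSucc) f) = _
        rw [hb]
      constructor
      · exact ⟨dcoeff hs b (v (Fin.last k)), by rw [hiter, dirDeriv_poly]⟩
      · intro x hx
        rw [hiter]
        have h1 := poly_dirDeriv_bound hd hp hr hs b (v (Fin.last k)) hx
        have h2 : (⨆ y : Set.Icc (0:Fin d → ℝ) 1, |poly hs b y.1|)
            ≤ (∏ l : Fin k, (∑ j, |v l.castSucc j| ^ p)^(1/p)) *
                ⨆ y : Set.Icc (0:Fin d → ℝ) 1, |f y.1| := by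
          refine ciSup_le fun y => ?_
          rw [← hb]
          exact hbound y.1 y.2
        have hNp0 : 0 ≤ (∑ j, |v (Fin.last k) j| ^ p)^(1/p) :=
          Real.rpow_nonneg
            (Finset.sum_nonneg fun j _ => Real.rpow_nonneg (abs_nonneg _) p) _
        calc |dirDeriv d (v (Fin.last k)) (poly hs b) x|
            ≤ (∑ j, |v (Fin.last k) j| ^ p)^(1/p) *
                ⨆ y : Set.Icc (0:Fin d → ℝ) 1, |poly hs b y.1| := h1
          _ ≤ (∑ j, |v (Fin.last k) j| ^ p)^(1/p) *
                ((∏ l : Fin k, (∑ j, |v l.castSucc j| ^ p)^(1/p)) *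
                  ⨆ y : Set.Icc (0:Fin d → ℝ) 1, |f y.1|) :=
              mul_le_mul_of_nonneg_left h2 hNp0
          _ = (∏ l : Fin (k+1), (∑ j, |v l j| ^ p)^(1/p)) *
                ⨆ y : Set.Icc (0:Fin d → ℝ) 1, |f y.1| := by
              rw [Fin.prod_univ_castSucc]; ring
  refine ⟨?_, fun k v x hx => (main k v).2 x hx⟩
  intro v x hx
  have := poly_dirDeriv_bound hd hp hr hs a v hx
  rw [hfeq]
  exact this
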